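/- Let x_1,...,x_r be elements of the Jacobson radical of a Noetherian ring R and M a finitely generated R-module. Suppose the limit closure of {x_1,...,x_r} in M equals (x_1,...,x_r)M. Then the limit closure of {x_1,...,x_{r-1}} in M equals (x_1,...,x_{r-1})M. -/
import Mathlib

open Pointwise

/-- The limit closure of the sequence `xs = x₁, …, x_r` in the `R`-module `M`. -/
noncomputable def limitClosure {R : Type*} [CommRing R] (M : Type*) [AddCommGroup M]
    [Module R M] (xs : List R) : Submodule R M :=
  ⨆ n : ℕ, Submodule.comap (LinearMap.lsmul R M (xs.prod ^ n))
    (Ideal.span ((· ^ (n + 1)) '' {x | x ∈ xs}) • (⊤ : Submodule R M))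

section Aux

variable {R : Type*} [CommRing R] {M : Type*} [AddCommGroup M] [Module R M]

/-- The `n`-th stage of the limit closure. -/
noncomputable def lcAux (M : Type*) [AddCommGroup M] [Module R M] (xs : List R) (n : ℕ) :
    Submodule R M :=
  Submodule.comap (LinearMap.lsmul R M (xs.prod ^ n))
    (Ideal.span ((· ^ (n + 1)) '' {x | x ∈ xs}) • (⊤ : Submodule R M))

lemma limitClosure_eq (xs : List R) : limitClosure M xs = ⨆ n : ℕ, lcAux M xs n := rfl

lemma mem_lcAux_iff {xs : List R} {n : ℕ} {z : M} :
    z ∈ lcAux M xs n ↔ xs.prod ^ n • z ∈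
      Ideal.span ((· ^ (n + 1)) '' {x | x ∈ xs}) • (⊤ : Submodule R M) := Iff.rfl

lemma lcAux_mono (xs : List R) : Monotone (lcAux M xs) := by
  apply monotone_nat_of_le_succ
  intro n z hz
  rw [mem_lcAux_iff] at hz ⊢
  have key : ∀ a ∈ Ideal.span ((· ^ (n + 1)) '' {x | x ∈ xs}),
      xs.prod * a ∈ Ideal.span ((· ^ (n + 1 + 1)) '' {x | x ∈ xs}) := by
    intro a ha
    induction ha using Submodule.span_induction with
    | mem b hb =>
      obtain ⟨x, hx, rfl⟩ := hb
      obtain ⟨c, hc⟩ := List.dvd_prod hx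
      have : xs.prod * x ^ (n + 1) = c * x ^ (n + 1 + 1) := by rw [hc]; ring
      rw [this]
      exact Ideal.mul_mem_left _ _ (Ideal.subset_span ⟨x, hx, rfl⟩)
    | zero => simp
    | add b c _ _ hb hc => rw [mul_add]; exact add_mem hb hc
    | smul r b _ hb => rw [smul_eq_mul, mul_left_comm]; exact Ideal.mul_mem_left _ _ hb
  have main : ∀ w ∈ Ideal.span ((· ^ (n + 1)) '' {x | x ∈ xs}) • (⊤ : Submodule R M),
      xs.prod • w ∈ Ideal.span ((· ^ (n + 1 + 1)) '' {x | x ∈ xs}) • (⊤ : Submodule R M) := by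
    intro w hw
    refine Submodule.smul_induction_on hw (fun a ha m _ => ?_) (fun w1 w2 h1 h2 => ?_)
    · rw [← mul_smul]
      exact Submodule.smul_mem_smul (key a ha) trivial
    · rw [smul_add]; exact add_mem h1 h2
  have : xs.prod ^ (n + 1) • z = xs.prod • (xs.prod ^ n • z) := by
    rw [← mul_smul, ← pow_succ']
  rw [this]
  exact main _ hz

lemma mem_limitClosure_iff {xs : List R} {z : M} :
    z ∈ limitClosure M xs ↔ ∃ n : ℕ, xs.prod ^ n • z ∈
      Ideal.span ((· ^ (n + 1)) '' {x | x ∈ xs}) • (⊤ : Submodule R M) := by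
  rw [limitClosure_eq, Submodule.mem_iSup_of_directed _ (lcAux_mono xs).directed_le]
  rfl

lemma span_smul_le_limitClosure (xs : List R) :
    Ideal.span {x | x ∈ xs} • (⊤ : Submodule R M) ≤ limitClosure M xs := by
  intro z hz
  rw [mem_limitClosure_iff]
  refine ⟨0, ?_⟩
  have himg : ((· ^ (0 + 1)) '' {x | x ∈ xs}) = {x | x ∈ xs} := by
    ext t; simp
  rw [pow_zero, one_smul, himg]
  exact hz

lemma mem_limitClosure_concat (ys : List R) (y : R) (k : ℕ) (m : M)
    (hm : y ^ k • m ∈ limitClosure M ys) : m ∈ limitClosure M (ys ++ [y]) := by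
  rw [mem_limitClosure_iff] at hm ⊢
  obtain ⟨n₀, hn₀⟩ := hm
  set n := max n₀ k with hn
  have h1 : y ^ k • m ∈ lcAux M ys n := lcAux_mono ys (le_max_left n₀ k) hn₀
  rw [mem_lcAux_iff] at h1
  refine ⟨n, ?_⟩
  have hprod : (ys ++ [y]).prod = ys.prod * y := by simp
  have hsc : (ys.prod * y) ^ n = y ^ (n - k) * (ys.prod ^ n * y ^ k) := by
    have h2 : y ^ (n - k) * y ^ k = y ^ n := by
      rw [← pow_add]; congr 1; omega
    calc (ys.prod * y) ^ n = ys.prod ^ n * (y ^ (n - k) * y ^ k) := by rw [h2, mul_pow]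
      _ = y ^ (n - k) * (ys.prod ^ n * y ^ k) := by ring
  have hsm : (ys ++ [y]).prod ^ n • m = y ^ (n - k) • (ys.prod ^ n • (y ^ k • m)) := by
    rw [hprod, hsc, mul_smul, mul_smul]
  rw [hsm]
  have hle : Ideal.span ((· ^ (n + 1)) '' {x | x ∈ ys}) • (⊤ : Submodule R M) ≤
      Ideal.span ((· ^ (n + 1)) '' {x | x ∈ ys ++ [y]}) • (⊤ : Submodule R M) := by
    refine Submodule.smul_mono_left (Ideal.span_mono (Set.image_mono ?_))
    intro x hx
    simp only [Set.mem_setOf_eq, List.mem_append] at hx ⊢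
    exact Or.inl hx
  exact Submodule.smul_mem _ _ (hle h1)

end Aux

/-- Let `x₁, …, x_r` be elements of the Jacobson radical of a Noetherian
ring `R` and `M` a finitely generated `R`-module. If the limit closure of `{x₁,…,x_r}` in `M`
equals `(x₁,…,x_r)M`, then the limit closure of `{x₁,…,x_{r-1}}` in `M` equals
`(x₁,…,x_{r-1})M`. -/
theorem limitClosure_dropLast {R : Type*} [CommRing R] [IsNoetherianRing R]
    {M : Type*} [AddCommGroup M] [Module R M] [Module.Finite R M]
    (xs : List R) (hjac : ∀ x ∈ xs, x ∈ Ideal.jacobson (⊥ : Ideal R))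
    (h : limitClosure M xs = Ideal.span {x | x ∈ xs} • (⊤ : Submodule R M)) :
    limitClosure M xs.dropLast = Ideal.span {x | x ∈ xs.dropLast} • (⊤ : Submodule R M) := by
  rcases xs.eq_nil_or_concat with rfl | ⟨ys, y, rfl⟩
  · simpa using h
  simp only [List.concat_eq_append] at hjac h ⊢
  rw [List.dropLast_concat]
  set S := Ideal.span {x | x ∈ ys} • (⊤ : Submodule R M) with hS
  have hSle : S ≤ limitClosure M ys := span_smul_le_limitClosure ys
  refine le_antisymm ?_ hSle
  have hNoeth : IsNoetherian R M := inferInstance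
  set T := limitClosure M ys with hT
  have hmono : Monotone (fun k : ℕ => Submodule.comap (LinearMap.lsmul R M (y ^ k)) T) := by
    apply monotone_nat_of_le_succ
    intro k m hm
    simp only [Submodule.mem_comap, LinearMap.lsmul_apply] at hm ⊢
    rw [pow_succ', mul_smul]
    exact Submodule.smul_mem _ _ hm
  obtain ⟨K, hK⟩ := monotone_stabilizes_iff_noetherian.mpr hNoeth ⟨_, hmono⟩
  set Tinf := Submodule.comap (LinearMap.lsmul R M (y ^ K)) T with hTinf
  -- key decomposition: elements of `Tinf` lie in `S ⊔ ⟨y⟩ • Tinf`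
  have hstep : Tinf ≤ S ⊔ Ideal.span {y} • Tinf := by
    intro w hw
    have hwT : y ^ K • w ∈ T := hw
    have h2 : w ∈ Ideal.span {x | x ∈ ys ++ [y]} • (⊤ : Submodule R M) := by
      rw [← h]
      exact mem_limitClosure_concat ys y K w hwT
    have hset : {x | x ∈ ys ++ [y]} = {x | x ∈ ys} ∪ {y} := by
      ext t; simp [or_comm]
    rw [hset, Ideal.span_union, Submodule.sup_smul] at h2
    obtain ⟨s', hs', t, ht, hst⟩ := Submodule.mem_sup.mp h2
    rw [Submodule.ideal_span_singleton_smul] at ht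
    have ht' : t ∈ y • ((⊤ : Submodule R M) : Set M) := by
      rwa [← Submodule.coe_pointwise_smul, SetLike.mem_coe]
    obtain ⟨m', -, hm'⟩ := Set.mem_smul_set.mp ht'
    have hsS : y ^ K • s' ∈ S := Submodule.smul_mem _ _ hs'
    have hm'T : m' ∈ Tinf := by
      have h3 : y ^ (K + 1) • m' = y ^ K • w - y ^ K • s' := by
        have : y • m' = w - s' := by rw [hm', ← hst]; abel
        rw [pow_succ, mul_smul, this, smul_sub]
      have h4 : y ^ (K + 1) • m' ∈ T :=
        h3 ▸ Submodule.sub_mem _ hwT (hSle hsS)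
      have h5 : m' ∈ Submodule.comap (LinearMap.lsmul R M (y ^ (K + 1))) T := h4
      have h6 := hK (K + 1) (Nat.le_succ K)
      simp only [OrderHom.coe_mk] at h6
      rw [hTinf, h6]
      exact h5
    refine Submodule.mem_sup.mpr ⟨s', hs', y • m', ?_, hst ▸ by rw [hm']⟩
    exact Submodule.smul_mem_smul (Submodule.mem_span_singleton_self y) hm'T
  have hyJ : Ideal.span {y} ≤ Ideal.jacobson (⊥ : Ideal R) := by
    rw [Ideal.span_le]
    intro t ht
    rw [Set.mem_singleton_iff] at ht
    subst ht
    exact hjac t (by simp)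
  have hfinal : Tinf ≤ S :=
    Submodule.le_of_le_smul_of_le_jacobson_bot (IsNoetherian.noetherian Tinf) hyJ hstep
  intro z hz
  have hzT : z ∈ Tinf := by
    show y ^ K • z ∈ T
    exact Submodule.smul_mem _ _ hz
  exact hfinal hzT
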